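/- Let V be a finite set, let f_1, …, f_k : 2^V → ℝ≥0 be non-negative monotone submodular functions with f_i(∅) = 0 for all i, let x be a fractional allocation on V, and let U ⊆ V be nonempty. For i ∈ {1,…,k} and θ ∈ [0,1] let A(i,θ) = {v ∈ U : x(v,i) ≥ θ}. Then there exist i ∈ {1,…,k} and θ ∈ [0,1] such that A(i,θ) is nonempty and f_i(A(i,θ)) / |A(i,θ)| ≤ OPT_frac / |U|, where OPT_frac = Σ_{i=1}^k f̂_i(x_i). -/

import Mathlib

open scoped BigOperators

/-- The Lovász extension `f̂(x) = ∫₀¹ f(x^θ) dθ`, where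
`x^θ = {v ∈ V : x(v) ≥ θ}`. -/
noncomputable def lovasz {V : Type*} [Fintype V] (f : Finset V → ℝ) (x : V → ℝ) : ℝ :=
  ∫ θ in (0:ℝ)..1, f (Finset.univ.filter (fun v => θ ≤ x v))

-- auxiliary: integral of step function
lemma step_integral (a ε : ℝ) (ha : a ∈ Set.Icc (0:ℝ) 1) :
    ∫ θ in (0:ℝ)..1, (if θ ≤ a then ε else 0) = ε * a := by
  have : (fun θ : ℝ => if θ ≤ a then ε else 0)
      = Set.indicator {θ : ℝ | θ ≤ a} (fun _ => ε) := by
    ext θ; simp [Set.indicator_apply]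
  rw [this, intervalIntegral.integral_indicator ha, intervalIntegral.integral_const,
    smul_eq_mul, sub_zero, mul_comm]

/-- **Main greedy lemma for monotone MSCA.**
Let `f_1, …, f_k` be non-negative monotone submodular functions on a finite set `V`
with `f_i(∅) = 0`, let `x` be a fractional allocation on `V`, and let `U ⊆ V` be
nonempty. For `i` and `θ ∈ [0,1]`, let `A(i,θ) = {v ∈ U : x(v,i) ≥ θ}`. Then there
exist `i` and `θ ∈ [0,1]` such that `A(i,θ)` is nonempty and
`f_i(A(i,θ)) / |A(i,θ)| ≤ OPT_frac / |U|`, where `OPT_frac = ∑_i f̂_i(x_i)`. -/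
theorem monotone_msca_greedy_main
    {V : Type*} [Fintype V] [DecidableEq V]
    (k : ℕ) (f : Fin k → Finset V → ℝ)
    (hnonneg : ∀ i A, 0 ≤ f i A)
    (hmono : ∀ i, ∀ A B : Finset V, A ⊆ B → f i A ≤ f i B)
    (hsub : ∀ i, ∀ A B : Finset V, f i A + f i B ≥ f i (A ∪ B) + f i (A ∩ B))
    (hempty : ∀ i, f i ∅ = 0)
    (x : V → Fin k → ℝ)
    (hx01 : ∀ v i, x v i ∈ Set.Icc (0:ℝ) 1)
    (hxsum : ∀ v, ∑ i, x v i = 1)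
    (U : Finset V) (hU : U.Nonempty) :
    ∃ (i : Fin k) (θ : ℝ), θ ∈ Set.Icc (0:ℝ) 1 ∧
      (U.filter (fun v => θ ≤ x v i)).Nonempty ∧
      f i (U.filter (fun v => θ ≤ x v i)) / ((U.filter (fun v => θ ≤ x v i)).card : ℝ)
        ≤ (∑ i, lovasz (f i) (fun v => x v i)) / (U.card : ℝ) := by
  classical
  set OPT := ∑ i, lovasz (f i) (fun v => x v i) with hOPT
  have hUcard : (0:ℝ) < U.card := by exact_mod_cast Finset.card_pos.mpr hU
  set c := OPT / (U.card : ℝ) with hc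
  by_contra hcon
  push_neg at hcon
  set A : Fin k → ℝ → Finset V := fun i θ => U.filter (fun v => θ ≤ x v i) with hAdef
  -- strict inequality from the contradiction hypothesis
  have hstrict : ∀ i θ, θ ∈ Set.Icc (0:ℝ) 1 → (A i θ).Nonempty →
      c * ((A i θ).card : ℝ) < f i (A i θ) := by
    intro i θ hθ hne
    have hcardpos : (0:ℝ) < ((A i θ).card : ℝ) := by
      exact_mod_cast Finset.card_pos.mpr hne
    have := hcon i θ hθ hne
    rw [div_lt_div_iff₀ hUcard hcardpos] at this
    calc c * ((A i θ).card : ℝ) = OPT * ((A i θ).card : ℝ) / (U.card : ℝ) := by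
          rw [hc]; ring
      _ < f i (A i θ) := by
          rw [div_lt_iff₀ hUcard]; linarith
  -- antitonicity
  have hAmono : ∀ i, ∀ θ₁ θ₂ : ℝ, θ₁ ≤ θ₂ → A i θ₂ ⊆ A i θ₁ := by
    intro i θ₁ θ₂ h
    exact Finset.monotone_filter_right U (fun v _ hv => le_trans h hv)
  have hanti : ∀ i, Antitone (fun θ => f i (A i θ)) :=
    fun i θ₁ θ₂ h => hmono i _ _ (hAmono i θ₁ θ₂ h)
  have hcardanti : ∀ i, Antitone (fun θ => ((A i θ).card : ℝ)) :=
    fun i θ₁ θ₂ h => Nat.cast_le.mpr (Finset.card_le_card (hAmono i θ₁ θ₂ h))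
  have hint_f : ∀ i, IntervalIntegrable (fun θ => f i (A i θ))
      MeasureTheory.volume 0 1 := fun i => (hanti i).intervalIntegrable
  have hint_card : ∀ i, IntervalIntegrable (fun θ => ((A i θ).card : ℝ))
      MeasureTheory.volume 0 1 := fun i => (hcardanti i).intervalIntegrable
  -- integral of card
  have hcard_int : ∀ i, ∫ θ in (0:ℝ)..1, ((A i θ).card : ℝ) = ∑ v ∈ U, x v i := by
    intro i
    have h1 : ∀ θ : ℝ, ((A i θ).card : ℝ) = ∑ v ∈ U, (if θ ≤ x v i then (1:ℝ) else 0) := by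
      intro θ
      rw [hAdef]
      dsimp only
      rw [Finset.card_filter, Nat.cast_sum]
      exact Finset.sum_congr rfl (fun v _ => by split_ifs <;> simp)
    have h2 : ∫ θ in (0:ℝ)..1, ((A i θ).card : ℝ)
        = ∑ v ∈ U, ∫ θ in (0:ℝ)..1, (if θ ≤ x v i then (1:ℝ) else 0) := by
      rw [← intervalIntegral.integral_finset_sum]
      · exact intervalIntegral.integral_congr (fun θ _ => h1 θ)
      · intro v hv
        have h : Antitone (fun θ : ℝ => if θ ≤ x v i then (1:ℝ) else 0) := by
          intro a b hab
          dsimp only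
          by_cases h2 : b ≤ x v i
          · rw [if_pos h2, if_pos (le_trans hab h2)]
          · rw [if_neg h2]
            split_ifs <;> norm_num
        exact h.intervalIntegrable
    rw [h2]
    refine Finset.sum_congr rfl (fun v hv => ?_)
    rw [step_integral _ _ (hx01 v i), one_mul]
  -- integral of f dominated by lovasz
  have hf_le_lovasz : ∀ i, ∫ θ in (0:ℝ)..1, f i (A i θ) ≤ lovasz (f i) (fun v => x v i) := by
    intro i
    have hanti2 : Antitone (fun θ => f i (Finset.univ.filter (fun v => θ ≤ x v i))) := by
      intro θ₁ θ₂ h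
      exact hmono i _ _ (Finset.monotone_filter_right _ (fun v _ hv => le_trans h hv))
    exact intervalIntegral.integral_mono_on (by norm_num) (hint_f i)
      hanti2.intervalIntegrable
      (fun θ _ => hmono i _ _ (Finset.filter_subset_filter _ (Finset.subset_univ U)))
  -- choose v₀, i₀ with x v₀ i₀ > 0
  obtain ⟨v₀, hv₀⟩ := hU
  have : ∃ i₀, 0 < x v₀ i₀ := by
    by_contra h'
    push_neg at h'
    have : ∑ i, x v₀ i = 0 :=
      Finset.sum_eq_zero (fun i _ => le_antisymm (h' i) (hx01 v₀ i).1)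
    rw [hxsum v₀] at this; norm_num at this
  obtain ⟨i₀, hδpos⟩ := this
  set δ := x v₀ i₀ with hδ
  have hδ1 : δ ≤ 1 := (hx01 v₀ i₀).2
  -- epsilon
  set g : ℝ → ℝ := fun t => f i₀ (A i₀ t) - c * ((A i₀ t).card : ℝ) with hg
  set T : Finset ℝ := U.image (fun v => x v i₀) with hT
  have hTne : (T.image g).Nonempty := ⟨g (x v₀ i₀), Finset.mem_image_of_mem g
    (Finset.mem_image_of_mem _ hv₀)⟩
  set ε := (T.image g).min' hTne with hε
  have hg_pos : ∀ t ∈ T, 0 < g t := by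
    intro t ht
    obtain ⟨v, hv, rfl⟩ := Finset.mem_image.mp ht
    have hne : (A i₀ (x v i₀)).Nonempty :=
      ⟨v, Finset.mem_filter.mpr ⟨hv, le_refl _⟩⟩
    have := hstrict i₀ (x v i₀) (hx01 v i₀) hne
    simp only [hg]; linarith
  have hεpos : 0 < ε := by
    obtain ⟨t, ht, hteq⟩ := Finset.mem_image.mp ((T.image g).min'_mem hTne)
    rw [hε, ← hteq]; exact hg_pos t ht
  have hεle : ∀ t ∈ T, ε ≤ g t := fun t ht =>
    Finset.min'_le _ _ (Finset.mem_image_of_mem g ht)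
  -- pointwise lower bound at i₀
  have hkey : ∀ θ ∈ Set.Icc (0:ℝ) 1,
      c * ((A i₀ θ).card : ℝ) + (if θ ≤ δ then ε else 0) ≤ f i₀ (A i₀ θ) := by
    intro θ hθ
    by_cases hθδ : θ ≤ δ
    · rw [if_pos hθδ]
      have hne : (A i₀ θ).Nonempty := ⟨v₀, Finset.mem_filter.mpr ⟨hv₀, hθδ⟩⟩
      have hne' : ((A i₀ θ).image (fun v => x v i₀)).Nonempty := hne.image _
      obtain ⟨w, hw, hweq⟩ := Finset.mem_image.mp (Finset.min'_mem _ hne')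
      set m := ((A i₀ θ).image (fun v => x v i₀)).min' hne' with hm
      have hwU : w ∈ U := (Finset.mem_filter.mp hw).1
      have hmT : m ∈ T := by rw [← hweq]; exact Finset.mem_image_of_mem _ hwU
      have hθm : θ ≤ m := by
        rw [← hweq]; exact (Finset.mem_filter.mp hw).2
      have hAm : A i₀ m = A i₀ θ := by
        apply Finset.Subset.antisymm
        · exact hAmono i₀ θ m hθm
        · intro v hv
          have hvm : m ≤ x v i₀ :=
            Finset.min'_le _ _ (Finset.mem_image_of_mem _ hv)
          exact Finset.mem_filter.mpr ⟨(Finset.mem_filter.mp hv).1, hvm⟩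
      have := hεle m hmT
      simp only [hg] at this
      rw [hAm] at this
      linarith
    · rw [if_neg hθδ, add_zero]
      rcases (A i₀ θ).eq_empty_or_nonempty with he | hne
      · rw [he, hempty]; simp
      · exact le_of_lt (hstrict i₀ θ hθ hne)
  -- lower bound for other i
  have hkey2 : ∀ i, ∀ θ ∈ Set.Icc (0:ℝ) 1, c * ((A i θ).card : ℝ) ≤ f i (A i θ) := by
    intro i θ hθ
    rcases (A i θ).eq_empty_or_nonempty with he | hne
    · rw [he, hempty]; simp
    · exact le_of_lt (hstrict i θ hθ hne)
  -- integrate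
  have hind_int : IntervalIntegrable (fun θ : ℝ => if θ ≤ δ then ε else 0)
      MeasureTheory.volume 0 1 := by
    have h : Antitone (fun θ : ℝ => if θ ≤ δ then ε else 0) := by
      intro a b hab
      dsimp only
      by_cases h2 : b ≤ δ
      · rw [if_pos h2, if_pos (le_trans hab h2)]
      · rw [if_neg h2]
        split_ifs
        · exact le_of_lt hεpos
        · exact le_refl 0
    exact h.intervalIntegrable
  have hI0 : c * (∑ v ∈ U, x v i₀) + ε * δ ≤ ∫ θ in (0:ℝ)..1, f i₀ (A i₀ θ) := by
    have hle := intervalIntegral.integral_mono_on (by norm_num)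
      (((hint_card i₀).const_mul c).add hind_int) (hint_f i₀) hkey
    rwa [intervalIntegral.integral_add ((hint_card i₀).const_mul c) hind_int,
      intervalIntegral.integral_const_mul, hcard_int,
      step_integral δ ε ⟨le_of_lt hδpos, hδ1⟩] at hle
  have hIi : ∀ i, c * (∑ v ∈ U, x v i) ≤ ∫ θ in (0:ℝ)..1, f i (A i θ) := by
    intro i
    have hle := intervalIntegral.integral_mono_on (by norm_num)
      ((hint_card i).const_mul c) (hint_f i) (hkey2 i)
    rwa [intervalIntegral.integral_const_mul, hcard_int] at hle
  have hswap : ∑ i, ∑ v ∈ U, x v i = (U.card : ℝ) := by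
    rw [Finset.sum_comm]
    simp [hxsum]
  have hsum : c * (U.card : ℝ) + ε * δ ≤ ∑ i, ∫ θ in (0:ℝ)..1, f i (A i θ) := by
    have h1 : ∑ i, (c * (∑ v ∈ U, x v i) + if i = i₀ then ε * δ else 0)
        ≤ ∑ i, ∫ θ in (0:ℝ)..1, f i (A i θ) := by
      apply Finset.sum_le_sum
      intro i _
      by_cases hi : i = i₀
      · subst hi; rw [if_pos rfl]; exact hI0
      · rw [if_neg hi, add_zero]; exact hIi i
    have e : ∑ i, (c * (∑ v ∈ U, x v i) + if i = i₀ then ε * δ else 0)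
        = c * (U.card : ℝ) + ε * δ := by
      rw [Finset.sum_add_distrib, ← Finset.mul_sum, hswap]
      simp
    rwa [e] at h1
  have hle2 : ∑ i, ∫ θ in (0:ℝ)..1, f i (A i θ) ≤ OPT :=
    Finset.sum_le_sum (fun i _ => hf_le_lovasz i)
  have hcU : c * (U.card : ℝ) = OPT := div_mul_cancel₀ OPT (ne_of_gt hUcard)
  have hpos := mul_pos hεpos hδpos
  linarith
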